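/- Let W : ℝ³ → ℝ⁴ be W(η) = (η_1, η_2, η_1 η_3, η_2 η_3), and let T be the 3×4 matrix with rows (α,0,0,0), (0,α,0,0), (0,0,0,1). For any η with η_2 > 0 and any α > η_3²/(4η_2), the symmetric 3×3 matrix T·∇W(η) + (∇W(η))ᵀ·Tᵀ is positive definite, where ∇W(η) is the 4×3 Jacobian of W at η. -/

import Mathlib

open Matrix

theorem lmi_posdef (α : ℝ) (η : Fin 3 → ℝ) (hη2 : 0 < η 1)
    (hα : α > (η 2) ^ 2 / (4 * η 1))
    (T : Matrix (Fin 3) (Fin 4) ℝ)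
    (hT : T = !![α, 0, 0, 0; 0, α, 0, 0; 0, 0, 0, 1])
    (Jac : Matrix (Fin 4) (Fin 3) ℝ)
    (hJac : Jac = !![1, 0, 0; 0, 1, 0; η 2, 0, η 0; 0, η 2, η 1]) :
    (T * Jac + (T * Jac)ᵀ).PosDef := by
  have hM : T * Jac + (T * Jac)ᵀ = !![2*α, 0, 0; 0, 2*α, η 2; 0, η 2, 2*η 1] := by
    subst hT hJac
    ext i j
    fin_cases i <;> fin_cases j <;>
      simp [Matrix.mul_apply, Fin.sum_univ_four, Matrix.transpose_apply,
        Matrix.vecHead, Matrix.vecTail] <;> ring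
  rw [hM]
  have hαpos : 0 < α := lt_of_le_of_lt (div_nonneg (sq_nonneg _) (by linarith)) hα
  have hkey : (η 2) ^ 2 < 4 * η 1 * α := by
    have := (div_lt_iff₀ (by linarith : (0:ℝ) < 4 * η 1)).mp hα
    linarith
  rw [Matrix.posDef_iff_dotProduct_mulVec]
  constructor
  · ext i j
    fin_cases i <;> fin_cases j <;>
      simp [Matrix.conjTranspose_apply, Matrix.vecHead, Matrix.vecTail]
  · intro x hx
    have h0 : x 0 ≠ 0 ∨ x 1 ≠ 0 ∨ x 2 ≠ 0 := by
      by_contra h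
      push_neg at h
      apply hx
      ext i
      fin_cases i <;> simp [h.1, h.2.1, h.2.2]
    have hq : (star x) ⬝ᵥ ((!![2*α, 0, 0; 0, 2*α, η 2; 0, η 2, 2*η 1]) *ᵥ x)
        = 2*α*(x 0)^2 + 2*α*(x 1)^2 + 2*(η 2)*(x 1)*(x 2) + 2*(η 1)*(x 2)^2 := by
      simp [dotProduct, Matrix.mulVec, Fin.sum_univ_three, Matrix.vecHead, Matrix.vecTail]
      ring
    rw [hq]
    rcases h0 with h | h | h
    · have h0 : 0 < (x 0)^2 := by positivity
      nlinarith [sq_nonneg (2*(η 1)*(x 2) + (η 2)*(x 1)), sq_nonneg (x 1), sq_nonneg (x 2), mul_pos hαpos h0]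
    · have h0 : 0 < (x 1)^2 := by positivity
      nlinarith [sq_nonneg (2*(η 1)*(x 2) + (η 2)*(x 1)), sq_nonneg (x 0), mul_pos (sub_pos.mpr hkey) h0]
    · have h0 : 0 < (x 2)^2 := by positivity
      rcases eq_or_ne (x 1) 0 with h1 | h1
      · have : 2*α*(x 0)^2 + 2*α*(x 1)^2 + 2*(η 2)*(x 1)*(x 2) + 2*(η 1)*(x 2)^2
            = 2*α*(x 0)^2 + 2*(η 1)*(x 2)^2 := by rw [h1]; ring
        rw [this]
        positivity
      · have h1' : 0 < (x 1)^2 := by positivity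
        nlinarith [sq_nonneg (2*(η 1)*(x 2) + (η 2)*(x 1)), sq_nonneg (x 0),
          mul_pos (sub_pos.mpr hkey) h1']
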